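/- Let (T, [···]) be a null symplectic triple system over a field of characteristic ≠ 2, 3. Then d_{x,x}² = 0 for every x ∈ T, and consequently d_{x,x}d_{y,y} + d_{y,y}d_{x,x} + 4d_{x,y}² = 0 for all x,y ∈ T. -/

import Mathlib

/-- A null symplectic triple system: a trilinear product which is symmetric in its
arguments and such that the maps `d_{x,y} = [xy·]` are derivations of the product. -/
def IsNullSTS (k : Type*) {T : Type*} [Field k] [AddCommGroup T] [Module k T]
    (tp : T →ₗ[k] T →ₗ[k] T →ₗ[k] T) : Prop :=
  (∀ x y z : T, tp x y z = tp y x z) ∧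
  (∀ x y z : T, tp x y z = tp x z y) ∧
  (∀ x y u v w : T, tp x y (tp u v w) =
      tp (tp x y u) v w + tp u (tp x y v) w + tp u v (tp x y w))

/-- In a null symplectic triple system over a field of characteristic
`≠ 2, 3`, `d_{x,x}² = 0` for all `x`, and consequently
`d_{x,x} d_{y,y} + d_{y,y} d_{x,x} + 4 d_{x,y}² = 0` for all `x, y`. -/
theorem nullSTS_dxx_squared_zero (k T : Type*) [Field k] [AddCommGroup T] [Module k T]
    [FiniteDimensional k T] (hchar2 : ringChar k ≠ 2) (hchar3 : ringChar k ≠ 3)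
    (tp : T →ₗ[k] T →ₗ[k] T →ₗ[k] T) (hnsts : IsNullSTS k tp) :
    (∀ x : T, tp x x ∘ₗ tp x x = 0) ∧
    (∀ x y : T, tp x x ∘ₗ tp y y + tp y y ∘ₗ tp x x + (4 : k) • (tp x y ∘ₗ tp x y) = 0) := by
  obtain ⟨h1, h2sym, hder⟩ := hnsts
  have hk2 : (2 : k) ≠ 0 := Ring.two_ne_zero hchar2
  have hk3 : (3 : k) ≠ 0 := by
    intro h
    have hdvd : ringChar k ∣ 3 :=
      (CharP.cast_eq_zero_iff k (ringChar k) 3).mp (by exact_mod_cast h)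
    rcases (Nat.dvd_prime Nat.prime_three).mp hdvd with h1' | h3'
    · exact CharP.ringChar_ne_one h1'
    · exact hchar3 h3'
  have part1 : ∀ x : T, tp x x ∘ₗ tp x x = 0 := by
    intro x
    have hA : ∀ w : T, tp (tp x x x) x w = 0 := by
      intro w
      have e := hder x x x x w
      rw [h1 x (tp x x x) w] at e
      have hb : tp (tp x x x) x w + tp (tp x x x) x w = 0 := by
        have e' : tp x x (tp x x w) =
            tp (tp x x x) x w + tp (tp x x x) x w + tp x x (tp x x w) := e
        exact (right_eq_add.mp e')
      have h2s : (2 : k) • tp (tp x x x) x w = 0 := by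
        rw [two_smul]; exact hb
      exact (smul_eq_zero.mp h2s).resolve_left hk2
    ext z
    simp only [LinearMap.comp_apply, LinearMap.zero_apply]
    have e := hder x z x x x
    have hz : tp x z x = tp x x z := h2sym x z x
    have l : tp x z (tp x x x) = 0 := by
      rw [h2sym x z (tp x x x), h1 x (tp x x x) z]; exact hA z
    have r1 : tp (tp x z x) x x = tp x x (tp x x z) := by
      rw [hz, h1 (tp x x z) x x, h2sym x (tp x x z) x]
    have r2 : tp x (tp x z x) x = tp x x (tp x x z) := by
      rw [hz, h2sym x (tp x x z) x]
    have r3 : tp x x (tp x z x) = tp x x (tp x x z) := by rw [hz]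
    rw [l, r1, r2, r3] at e
    have h3s : (3 : k) • tp x x (tp x x z) = 0 := by
      rw [show (3 : k) • tp x x (tp x x z) =
        tp x x (tp x x z) + tp x x (tp x x z) + tp x x (tp x x z) by module]
      exact e.symm
    exact (smul_eq_zero.mp h3s).resolve_left hk3
  refine ⟨part1, ?_⟩
  intro x y
  have hpt : ∀ u w : T, tp u u (tp u u w) = 0 := fun u w => by
    simpa using LinearMap.congr_fun (part1 u) w
  ext z
  simp only [LinearMap.add_apply, LinearMap.comp_apply, LinearMap.smul_apply,
    LinearMap.zero_apply]
  have hyx : tp y x = tp x y := LinearMap.ext fun w => h1 y x w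
  have key : tp (x + y) (x + y) (tp (x + y) (x + y) z) +
      tp (x - y) (x - y) (tp (x - y) (x - y) z) =
      (2 : k) • tp x x (tp x x z) + (2 : k) • tp y y (tp y y z) +
      (2 : k) • (tp x x (tp y y z) + tp y y (tp x x z) +
        (4 : k) • tp x y (tp x y z)) := by
    simp only [map_add, map_sub, LinearMap.add_apply, LinearMap.sub_apply, hyx]
    module
  rw [hpt (x + y) z, hpt (x - y) z, hpt x z, hpt y z, smul_zero] at key
  have h2s : (2 : k) • (tp x x (tp y y z) + tp y y (tp x x z) +
      (4 : k) • tp x y (tp x y z)) = 0 := by simpa using key.symm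
  exact (smul_eq_zero.mp h2s).resolve_left hk2
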